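/- Let Q_U be an N × k_U complex matrix and Q_V an N × k_V complex matrix, each with orthonormal columns, with k_V ≤ k_U ≤ N. Then ‖Q_V* Q_U‖_F² = k_V if and only if the column span of Q_V is contained in the column span of Q_U; equivalently, the subspace loss L₁(Q_U, Q_V) = k_V − ‖Q_V* Q_U‖_F² vanishes if and only if span(Q_V) ⊆ span(Q_U). -/

import Mathlib

open Matrix

/-- The Frobenius norm of a complex matrix: `‖A‖_F = (Σ_{i,j} |A_{ij}|²)^{1/2}`. -/
noncomputable def frobNorm {m n : Type*} [Fintype m] [Fintype n] (A : Matrix m n ℂ) : ℝ :=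
  Real.sqrt (∑ i, ∑ j, ‖A i j‖ ^ 2)

lemma star_dot_self {n : Type*} [Fintype n] (x : n → ℂ) :
    star x ⬝ᵥ x = ((∑ i, ‖x i‖ ^ 2 : ℝ) : ℂ) := by
  rw [Complex.ofReal_sum]
  refine Finset.sum_congr rfl fun i _ => ?_
  rw [Pi.star_apply, RCLike.star_def, Complex.conj_mul', Complex.ofReal_pow]

/-- Key per-vector lemma: for `Q` with orthonormal columns and unit vector `v`,
`‖Qᴴ v‖² ≤ 1`, with equality iff `v` lies in the span of the columns of `Q`. -/
lemma col_key {N k : ℕ} (Q : Matrix (Fin N) (Fin k) ℂ) (hQ : Qᴴ * Q = 1)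
    (v : Fin N → ℂ) (hv : (∑ n, ‖v n‖ ^ 2 : ℝ) = 1) :
    (∑ j, ‖(Qᴴ *ᵥ v) j‖ ^ 2 : ℝ) ≤ 1 ∧
      ((∑ j, ‖(Qᴴ *ᵥ v) j‖ ^ 2 : ℝ) = 1 ↔ v ∈ Submodule.span ℂ (Set.range Qᵀ)) := by
  set w : Fin k → ℂ := Qᴴ *ᵥ v with hw
  set r : Fin N → ℂ := v - Q *ᵥ w with hr
  have hsw : star v ᵥ* Q = star w := by
    rw [hw, star_mulVec, conjTranspose_conjTranspose]
  have ha1 : star v ⬝ᵥ (Q *ᵥ w) = star w ⬝ᵥ w := by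
    rw [dotProduct_mulVec, hsw]
  have ha2 : star (Q *ᵥ w) ⬝ᵥ v = star w ⬝ᵥ w := by
    rw [star_mulVec, ← dotProduct_mulVec, ← hw]
  have ha3 : star (Q *ᵥ w) ⬝ᵥ (Q *ᵥ w) = star w ⬝ᵥ w := by
    rw [star_mulVec, dotProduct_mulVec, vecMul_vecMul, hQ, vecMul_one]
  have hres : star r ⬝ᵥ r = star v ⬝ᵥ v - star w ⬝ᵥ w := by
    rw [hr, star_sub, sub_dotProduct, dotProduct_sub, dotProduct_sub, ha1, ha2, ha3]
    ring
  have hreal : ((∑ n, ‖r n‖ ^ 2 : ℝ) : ℂ) = ((1 - ∑ j, ‖w j‖ ^ 2 : ℝ) : ℂ) := by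
    rw [← star_dot_self, hres, star_dot_self, star_dot_self, hv]
    push_cast
    ring
  have hkey : (∑ n, ‖r n‖ ^ 2 : ℝ) = 1 - ∑ j, ‖w j‖ ^ 2 := by
    exact_mod_cast hreal
  have hnonneg : (0 : ℝ) ≤ ∑ n, ‖r n‖ ^ 2 :=
    Finset.sum_nonneg fun n _ => sq_nonneg _
  refine ⟨by linarith, ?_, ?_⟩
  · intro h1
    have hr0 : (∑ n, ‖r n‖ ^ 2 : ℝ) = 0 := by rw [hkey, h1]; ring
    have hrz : r = 0 := by
      funext n
      have h2 := (Finset.sum_eq_zero_iff_of_nonneg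
        (fun n _ => sq_nonneg (‖r n‖))).mp hr0 n (Finset.mem_univ n)
      have h3 : ‖r n‖ = 0 := by
        have := sq_eq_zero_iff.mp h2
        simpa using this
      simpa using norm_eq_zero.mp h3
    have hvq : Q *ᵥ w = v := by
      rw [hr] at hrz
      linear_combination (norm := module) -hrz
    show v ∈ Submodule.span ℂ (Set.range (Matrix.col Q))
    rw [← Matrix.range_mulVecLin]
    exact ⟨w, hvq⟩
  · intro hmem
    change v ∈ Submodule.span ℂ (Set.range (Matrix.col Q)) at hmem
    rw [← Matrix.range_mulVecLin] at hmem
    obtain ⟨u, hu0⟩ := hmem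
    have hu : Q *ᵥ u = v := hu0
    have hwu : w = u := by
      rw [hw, ← hu]
      show Qᴴ *ᵥ (Q *ᵥ u) = u
      rw [mulVec_mulVec, hQ, one_mulVec]
    have hr0 : r = 0 := by rw [hr, hwu, hu, sub_self]
    have hz : (∑ n, ‖r n‖ ^ 2 : ℝ) = 0 := by rw [hr0]; simp
    linarith [hkey]

/-- **Vanishing of the subspace loss characterizes inclusion of subspaces.**
For `Q_U ∈ ℂ^{N×k_U}` and `Q_V ∈ ℂ^{N×k_V}` with orthonormal columns and
`k_V ≤ k_U ≤ N`, one has `‖Q_Vᴴ Q_U‖_F² = k_V` (equivalently, the subspace loss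
`L₁(Q_U, Q_V) = k_V − ‖Q_Vᴴ Q_U‖_F²` vanishes) if and only if the column span of `Q_V`
is contained in the column span of `Q_U`. -/
theorem subspace_loss_eq_zero_iff_span_le (N kU kV : ℕ) (hVU : kV ≤ kU) (hUN : kU ≤ N)
    (QU : Matrix (Fin N) (Fin kU) ℂ) (QV : Matrix (Fin N) (Fin kV) ℂ)
    (hU : QUᴴ * QU = 1) (hV : QVᴴ * QV = 1) :
    frobNorm (QVᴴ * QU) ^ 2 = (kV : ℝ) ↔
      Submodule.span ℂ (Set.range QVᵀ) ≤ Submodule.span ℂ (Set.range QUᵀ) := by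
  have hfrob : frobNorm (QVᴴ * QU) ^ 2 = ∑ i, ∑ j, ‖(QVᴴ * QU) i j‖ ^ 2 := by
    rw [frobNorm, Real.sq_sqrt]
    exact Finset.sum_nonneg fun i _ => Finset.sum_nonneg fun j _ => sq_nonneg _
  have hrow : ∀ i : Fin kV, (∑ j, ‖(QVᴴ * QU) i j‖ ^ 2 : ℝ)
      = ∑ j, ‖(QUᴴ *ᵥ QVᵀ i) j‖ ^ 2 := by
    intro i
    refine Finset.sum_congr rfl fun j _ => ?_
    have h : (QUᴴ *ᵥ QVᵀ i) j = star ((QVᴴ * QU) i j) := by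
      simp only [mulVec, dotProduct, Matrix.mul_apply, conjTranspose_apply, transpose_apply,
        star_sum, star_mul', star_star]
      exact Finset.sum_congr rfl fun n _ => mul_comm _ _
    rw [h, norm_star]
  have hunit : ∀ i : Fin kV, (∑ n, ‖QVᵀ i n‖ ^ 2 : ℝ) = 1 := by
    intro i
    have h1 : star (QVᵀ i) ⬝ᵥ QVᵀ i = (QVᴴ * QV) i i := by
      simp [dotProduct, Matrix.mul_apply, conjTranspose_apply, transpose_apply]
    rw [star_dot_self, hV, Matrix.one_apply_eq] at h1
    exact_mod_cast h1
  have hck := fun i : Fin kV => col_key QU hU (QVᵀ i) (hunit i)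
  rw [hfrob]
  have hsum : (∑ i : Fin kV, ∑ j, ‖(QVᴴ * QU) i j‖ ^ 2 : ℝ)
      = ∑ i : Fin kV, ∑ j, ‖(QUᴴ *ᵥ QVᵀ i) j‖ ^ 2 :=
    Finset.sum_congr rfl fun i _ => hrow i
  rw [hsum]
  rw [Submodule.span_le, (Set.range_subset_iff : Set.range QVᵀ ⊆ _ ↔ _)]
  constructor
  · intro h i
    have hzero : (∑ i : Fin kV, (1 - ∑ j, ‖(QUᴴ *ᵥ QVᵀ i) j‖ ^ 2) : ℝ) = 0 := by
      rw [Finset.sum_sub_distrib, h]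
      simp
    have := (Finset.sum_eq_zero_iff_of_nonneg
      (fun i _ => by linarith [(hck i).1])).mp hzero i (Finset.mem_univ i)
    have heq : (∑ j, ‖(QUᴴ *ᵥ QVᵀ i) j‖ ^ 2 : ℝ) = 1 := by linarith
    exact (hck i).2.mp heq
  · intro h
    have heach : ∀ i : Fin kV, (∑ j, ‖(QUᴴ *ᵥ QVᵀ i) j‖ ^ 2 : ℝ) = 1 :=
      fun i => (hck i).2.mpr (h i)
    rw [Finset.sum_congr rfl fun i _ => heach i]
    simp
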